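/- The function g(b) = 2b³ − (4/3)b + (b⁴ − b²)·ln((1−b)/(1+b)) has a unique zero b_c in the open interval (0,1); moreover g(b) < 0 for all b ∈ (0, b_c) and g(b) > 0 for all b ∈ (b_c, 1). -/

import Mathlib

noncomputable section

/-- g(b) = 2b³ − (4/3)b + (b⁴ − b²) ln((1−b)/(1+b)). -/
def gfun (b : ℝ) : ℝ := 2*b^3 - (4/3)*b + (b^4 - b^2) * Real.log ((1-b)/(1+b))

/-- Auxiliary function: `gfun b = b^2 * (1 - b^2) * phifun b` on `(0,1)`. -/
def phifun (b : ℝ) : ℝ := (6*b^2 - 4)/(3*b - 3*b^3) - Real.log (1-b) + Real.log (1+b)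

lemma phifun_hasDerivAt {b : ℝ} (hb : b ∈ Set.Ioo (0:ℝ) 1) :
    HasDerivAt phifun
      ((18*b^4 - 18*b^2 + 12)/(3*b - 3*b^3)^2 + 1/(1-b) + 1/(1+b)) b := by
  obtain ⟨hb0, hb1⟩ := hb
  have hden0 : (0:ℝ) < 3*b - 3*b^3 := by
    nlinarith [mul_pos (mul_pos hb0 (show (0:ℝ) < 1-b by linarith)) (show (0:ℝ) < 1+b by linarith)]
  have hden : (3*b - 3*b^3) ≠ 0 := ne_of_gt hden0
  have h1b : (1:ℝ) - b ≠ 0 := by linarith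
  have h1b' : (1:ℝ) + b ≠ 0 := by linarith
  have hnum : HasDerivAt (fun x : ℝ => 6*x^2 - 4) (12*b) b := by
    have := ((hasDerivAt_pow 2 b).const_mul 6).sub_const 4
    exact this.congr_deriv (by ring)
  have hden' : HasDerivAt (fun x : ℝ => 3*x - 3*x^3) (3 - 9*b^2) b := by
    have := ((hasDerivAt_id b).const_mul 3).sub ((hasDerivAt_pow 3 b).const_mul 3)
    exact this.congr_deriv (by ring)
  have hdiv := hnum.div hden' hden
  have hlog1 : HasDerivAt (fun x : ℝ => Real.log (1 - x)) (-1/(1-b)) b := by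
    have h : HasDerivAt (fun x : ℝ => 1 - x) (-1) b := by
      exact ((hasDerivAt_const b (1:ℝ)).sub (hasDerivAt_id' b)).congr_deriv (by ring)
    exact h.log h1b
  have hlog2 : HasDerivAt (fun x : ℝ => Real.log (1 + x)) (1/(1+b)) b := by
    have h : HasDerivAt (fun x : ℝ => 1 + x) 1 b := by
      exact ((hasDerivAt_const b (1:ℝ)).add (hasDerivAt_id' b)).congr_deriv (by ring)
    exact h.log h1b'
  have := (hdiv.sub hlog1).add hlog2
  refine this.congr_deriv ?_
  rw [show (12*b*(3*b-3*b^3) - (6*b^2-4)*(3-9*b^2)) = 18*b^4 - 18*b^2 + 12 from by ring,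
    neg_div, sub_neg_eq_add]

lemma phifun_deriv_pos {b : ℝ} (hb : b ∈ Set.Ioo (0:ℝ) 1) :
    0 < (18*b^4 - 18*b^2 + 12)/(3*b - 3*b^3)^2 + 1/(1-b) + 1/(1+b) := by
  obtain ⟨hb0, hb1⟩ := hb
  have hden : (0:ℝ) < 3*b - 3*b^3 := by
    nlinarith [mul_pos (mul_pos hb0 (show (0:ℝ) < 1-b by linarith)) (show (0:ℝ) < 1+b by linarith)]
  have h1 : (0:ℝ) < (18*b^4 - 18*b^2 + 12)/(3*b - 3*b^3)^2 := by
    apply div_pos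
    · nlinarith [sq_nonneg (6*b^2 - 3)]
    · exact pow_pos hden 2
  have h2 : (0:ℝ) < 1/(1-b) := by
    have : (0:ℝ) < 1-b := by linarith
    positivity
  have h3 : (0:ℝ) < 1/(1+b) := by
    have : (0:ℝ) < 1+b := by linarith
    positivity
  linarith

lemma phifun_strictMono : StrictMonoOn phifun (Set.Ioo (0:ℝ) 1) := by
  apply strictMonoOn_of_deriv_pos (convex_Ioo 0 1)
  · exact fun x hx => (phifun_hasDerivAt hx).continuousAt.continuousWithinAt
  · intro x hx
    rw [interior_Ioo] at hx
    rw [(phifun_hasDerivAt hx).deriv]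
    exact phifun_deriv_pos hx

lemma gfun_eq {b : ℝ} (hb : b ∈ Set.Ioo (0:ℝ) 1) :
    gfun b = b^2 * (1 - b^2) * phifun b := by
  obtain ⟨hb0, hb1⟩ := hb
  have h1b : (0:ℝ) < 1 - b := by linarith
  have h1b' : (0:ℝ) < 1 + b := by linarith
  have hden : (3*b - 3*b^3) ≠ 0 := by
    have := mul_pos (mul_pos hb0 h1b) h1b'
    nlinarith
  unfold gfun phifun
  rw [Real.log_div (ne_of_gt h1b) (ne_of_gt h1b')]
  have hb2 : (1:ℝ) - b^2 ≠ 0 := ne_of_gt (by nlinarith [mul_pos h1b h1b'])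
  have hbne : b ≠ 0 := hb0.ne'
  field_simp
  ring

lemma phifun_half_neg : phifun (1/2) < 0 := by
  have hlog2 : Real.log 2 < 0.6931471808 := Real.log_two_lt_d9
  have hlog2' : (0:ℝ) < Real.log 2 := Real.log_pos (by norm_num)
  have h12 : Real.log (1 - (1:ℝ)/2) = -Real.log 2 := by
    rw [show (1:ℝ) - 1/2 = 2⁻¹ by norm_num, Real.log_inv]
  have h32 : Real.log (1 + (1:ℝ)/2) = Real.log 3 - Real.log 2 := by
    rw [show (1:ℝ) + 1/2 = 3/2 by norm_num, Real.log_div (by norm_num) (by norm_num)]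
  have hlog3 : Real.log 3 < Real.log 4 := Real.log_lt_log (by norm_num) (by norm_num)
  have hlog4 : Real.log 4 = 2 * Real.log 2 := by
    rw [show (4:ℝ) = 2^2 by norm_num, Real.log_pow]; push_cast; ring
  unfold phifun
  rw [h12, h32]
  have : (6*((1:ℝ)/2)^2 - 4)/(3*((1:ℝ)/2) - 3*((1:ℝ)/2)^3) = -20/9 := by norm_num
  rw [this]
  linarith

lemma phifun_09_pos : 0 < phifun (9/10) := by
  have h1 : (0:ℝ) < (6*((9:ℝ)/10)^2 - 4)/(3*((9:ℝ)/10) - 3*((9:ℝ)/10)^3) := by norm_num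
  have h2 : Real.log (1 - (9:ℝ)/10) < 0 := Real.log_neg (by norm_num) (by norm_num)
  have h3 : (0:ℝ) < Real.log (1 + (9:ℝ)/10) := Real.log_pos (by norm_num)
  unfold phifun
  linarith

/-- **Existence, uniqueness and sign of the critical zero b_c (Remark `rem_PV`).**
g has a unique zero b_c in (0,1); g < 0 on (0,b_c) and g > 0 on (b_c,1). -/
theorem gfun_unique_zero :
    ∃ bc ∈ Set.Ioo (0:ℝ) 1,
      gfun bc = 0 ∧
      (∀ b ∈ Set.Ioo (0:ℝ) 1, gfun b = 0 → b = bc) ∧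
      (∀ b : ℝ, 0 < b → b < bc → gfun b < 0) ∧
      (∀ b : ℝ, bc < b → b < 1 → 0 < gfun b) := by
  have hsub : Set.Icc ((1:ℝ)/2) (9/10) ⊆ Set.Ioo (0:ℝ) 1 := by
    intro x hx
    exact ⟨by linarith [hx.1], by linarith [hx.2]⟩
  have hcont : ContinuousOn phifun (Set.Icc ((1:ℝ)/2) (9/10)) :=
    fun x hx => ((phifun_hasDerivAt (hsub hx)).continuousAt).continuousWithinAt
  have hIVT := intermediate_value_Ioo (by norm_num : (1:ℝ)/2 ≤ 9/10) hcont
  have h0mem : (0:ℝ) ∈ Set.Ioo (phifun (1/2)) (phifun (9/10)) :=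
    ⟨phifun_half_neg, phifun_09_pos⟩
  obtain ⟨bc, hbc_mem, hbc0⟩ := hIVT h0mem
  have hbcI : bc ∈ Set.Ioo (0:ℝ) 1 := ⟨by linarith [hbc_mem.1], by linarith [hbc_mem.2]⟩
  have hfac : ∀ b ∈ Set.Ioo (0:ℝ) 1, (0:ℝ) < b^2 * (1 - b^2) := by
    intro b hb
    obtain ⟨hb0, hb1⟩ := hb
    nlinarith [mul_pos (mul_pos (pow_pos hb0 2) (show (0:ℝ) < 1-b by linarith)) (show (0:ℝ) < 1+b by linarith)]
  refine ⟨bc, hbcI, ?_, ?_, ?_, ?_⟩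
  · rw [gfun_eq hbcI, hbc0, mul_zero]
  · intro b hb hgb
    rw [gfun_eq hb] at hgb
    have hphib : phifun b = 0 := by
      rcases mul_eq_zero.1 hgb with h | h
      · exact absurd h (ne_of_gt (hfac b hb))
      · exact h
    exact phifun_strictMono.injOn hb hbcI (hphib.trans hbc0.symm)
  · intro b hb0 hbbc
    have hbI : b ∈ Set.Ioo (0:ℝ) 1 := ⟨hb0, by linarith [hbcI.2]⟩
    have : phifun b < phifun bc := phifun_strictMono hbI hbcI hbbc
    rw [gfun_eq hbI]
    exact mul_neg_of_pos_of_neg (hfac b hbI) (by rw [hbc0] at this; exact this)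
  · intro b hbcb hb1
    have hbI : b ∈ Set.Ioo (0:ℝ) 1 := ⟨by linarith [hbcI.1], hb1⟩
    have : phifun bc < phifun b := phifun_strictMono hbcI hbI hbcb
    rw [gfun_eq hbI]
    exact mul_pos (hfac b hbI) (by rw [hbc0] at this; exact this)
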